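/- Let B ∈ End(V ⊗ V) satisfy the braid relation and let K_N := ker([N!]_B) ⊆ V^{⊗N}. Then the two-sided ideal in the tensor algebra T(V) generated by ⋃_N K_N satisfies: for each N, its degree-N component contains K_N, and if B satisfies (1+B) [N-1]-compatibility (i.e., [N!]_B = (1_{V} ⊗ [(N−1)!]_B)·[N]'_B for the opposite recursion), then V ⊗ K_{N-1} + K_{N-1} ⊗ V ⊆ K_N. -/

import Mathlib

open TensorProduct Matrix

section Braided

variable {k : Type*} [Field k] {ι : Type*} [Fintype ι] [DecidableEq ι]

/-- The braid matrix `B` acting on tensor factors `i, i+1` (0-based) of the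
`N`-fold tensor power (in components). -/
def Bop (B : Matrix (ι × ι) (ι × ι) k) (N i : ℕ) :
    Matrix (Fin N → ι) (Fin N → ι) k :=
  if h : i + 1 < N then
    fun f g =>
      B (f ⟨i, Nat.lt_of_succ_lt h⟩, f ⟨i + 1, h⟩)
          (g ⟨i, Nat.lt_of_succ_lt h⟩, g ⟨i + 1, h⟩) *
        ∏ j : Fin N,
          if (j : ℕ) = i ∨ (j : ℕ) = i + 1 then 1 else (if f j = g j then (1 : k) else 0)
  else 1

/-- The descending products `1, B_{N-1}, B_{N-1}B_{N-2}, ...` (here `B_m` is the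
braid matrix acting on factors `m, m+1`, 1-based). -/
def chainDesc (B : Matrix (ι × ι) (ι × ι) k) (N : ℕ) :
    ℕ → Matrix (Fin N → ι) (Fin N → ι) k
  | 0 => 1
  | m + 1 => chainDesc B N m * Bop B N (N - 2 - m)

/-- The braided integer `[N]_B = 1 + B_{N-1} + B_{N-1}B_{N-2} + ⋯ + B_{N-1}⋯B_1`. -/
def braidedInt (B : Matrix (ι × ι) (ι × ι) k) (N : ℕ) :
    Matrix (Fin N → ι) (Fin N → ι) k :=
  ∑ m ∈ Finset.range N, chainDesc B N m

/-- Extension `M ↦ M ⊗ 1` of an operator on the `N`-fold tensor power to the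
`(N+1)`-fold tensor power. -/
def extendLast {k : Type*} [Field k] {ι : Type*} [Fintype ι] [DecidableEq ι] {N : ℕ}
    (M : Matrix (Fin N → ι) (Fin N → ι) k) :
    Matrix (Fin (N + 1) → ι) (Fin (N + 1) → ι) k :=
  fun f g => M (Fin.init f) (Fin.init g) * (if f (Fin.last N) = g (Fin.last N) then 1 else 0)

/-- The braided factorial: `[0!]_B = 1`, `[N!]_B = ([(N-1)!]_B ⊗ 1) [N]_B`. -/
def braidedFactorial (B : Matrix (ι × ι) (ι × ι) k) :
    (N : ℕ) → Matrix (Fin N → ι) (Fin N → ι) k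
  | 0 => 1
  | N + 1 => extendLast (braidedFactorial B N) * braidedInt B (N + 1)

end Braided

section Braided'

variable {k : Type*} [Field k] {ι : Type*} [Fintype ι] [DecidableEq ι]

/-- The ascending products `1, B_1, B_1B_2, ...`. -/
def chainAsc (B : Matrix (ι × ι) (ι × ι) k) (N : ℕ) :
    ℕ → Matrix (Fin N → ι) (Fin N → ι) k
  | 0 => 1
  | m + 1 => chainAsc B N m * Bop B N m

/-- The opposite braided integer `[N]'_B = 1 + B_1 + B_1B_2 + ⋯ + B_1⋯B_{N-1}`. -/
def braidedInt' (B : Matrix (ι × ι) (ι × ι) k) (N : ℕ) :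
    Matrix (Fin N → ι) (Fin N → ι) k :=
  ∑ m ∈ Finset.range N, chainAsc B N m

/-- Extension `M ↦ 1 ⊗ M` of an operator on the `N`-fold tensor power to the
`(N+1)`-fold tensor power. -/
def extendFirst {N : ℕ} (M : Matrix (Fin N → ι) (Fin N → ι) k) :
    Matrix (Fin (N + 1) → ι) (Fin (N + 1) → ι) k :=
  fun f g => (if f 0 = g 0 then 1 else 0) * M (Fin.tail f) (Fin.tail g)

/-- The monomial in the free (tensor) algebra on `V` corresponding to a
multi-index. -/
def fmono (k : Type*) [Field k] {ι : Type*} {N : ℕ} (f : Fin N → ι) :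
    FreeAlgebra k ι :=
  (List.ofFn fun s => FreeAlgebra.ι k (f s)).prod

/-- The element of the tensor algebra corresponding to a degree-`N` tensor `ω`. -/
def embedVec (k : Type*) [Field k] {ι : Type*} [Fintype ι] (N : ℕ)
    (ω : (Fin N → ι) → k) : FreeAlgebra k ι :=
  ∑ f : Fin N → ι, ω f • fmono k f

end Braided'


section Aux
set_option linter.unusedSectionVars false
variable {k : Type*} [Field k] {ι : Type*} [Fintype ι] [DecidableEq ι] {N : ℕ}

lemma eq_iff_cons (f g : Fin (N+1) → ι) : f = g ↔ f 0 = g 0 ∧ Fin.tail f = Fin.tail g := by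
  constructor
  · rintro rfl; exact ⟨rfl, rfl⟩
  · rintro ⟨h0, ht⟩
    funext j
    rcases Fin.eq_zero_or_eq_succ j with rfl | ⟨j', rfl⟩
    · exact h0
    · exact congrFun ht j'

lemma eq_iff_snoc (f g : Fin (N+1) → ι) :
    f = g ↔ Fin.init f = Fin.init g ∧ f (Fin.last N) = g (Fin.last N) := by
  constructor
  · rintro rfl; exact ⟨rfl, rfl⟩
  · rintro ⟨ht, h0⟩
    funext j
    rcases Fin.eq_castSucc_or_eq_last j with ⟨j', rfl⟩ | rfl
    · exact congrFun ht j'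
    · exact h0

lemma extendFirst_one : extendFirst (1 : Matrix (Fin N → ι) (Fin N → ι) k) = 1 := by
  ext f g
  simp only [extendFirst, Matrix.one_apply, eq_iff_cons f g, ite_and, ite_mul, one_mul, zero_mul]

lemma extendLast_one : extendLast (1 : Matrix (Fin N → ι) (Fin N → ι) k) = 1 := by
  ext f g
  simp only [extendLast, Matrix.one_apply, eq_iff_snoc f g, ite_and, mul_ite, mul_one, mul_zero]
  split <;> simp

lemma consEquiv_eq (a : ι) (t : Fin N → ι) :
    (Fin.consEquiv fun _ => ι) (a, t) = Fin.cons a t := rfl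
lemma snocEquiv_eq (a : ι) (t : Fin N → ι) :
    (Fin.snocEquiv fun _ => ι) (a, t) = Fin.snoc t a := rfl

lemma extendFirst_mul (M P : Matrix (Fin N → ι) (Fin N → ι) k) :
    extendFirst (M * P) = extendFirst M * extendFirst P := by
  ext f g
  simp only [extendFirst, Matrix.mul_apply]
  rw [← Equiv.sum_comp (Fin.consEquiv fun _ => ι)]
  simp only [consEquiv_eq, Fintype.sum_prod_type, Fin.tail_cons, Fin.cons_zero]
  rw [Finset.sum_comm]
  simp [ite_mul, zero_mul, mul_ite, mul_zero, Finset.sum_ite_eq, Finset.sum_ite_eq',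
    Finset.mul_sum]

lemma extendLast_mul (M P : Matrix (Fin N → ι) (Fin N → ι) k) :
    extendLast (M * P) = extendLast M * extendLast P := by
  ext f g
  simp only [extendLast, Matrix.mul_apply]
  rw [← Equiv.sum_comp (Fin.snocEquiv fun _ => ι)]
  simp only [snocEquiv_eq, Fintype.sum_prod_type, Fin.init_snoc, Fin.snoc_last]
  rw [Finset.sum_comm]
  simp [ite_mul, zero_mul, mul_ite, mul_zero, Finset.sum_ite_eq, Finset.sum_ite_eq',
    Finset.sum_mul]

lemma extendFirst_sum {α : Type*} (s : Finset α) (F : α → Matrix (Fin N → ι) (Fin N → ι) k) :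
    extendFirst (∑ x ∈ s, F x) = ∑ x ∈ s, extendFirst (F x) := by
  ext f g
  simp [extendFirst, Matrix.sum_apply, Finset.mul_sum]

lemma extendLast_sum {α : Type*} (s : Finset α) (F : α → Matrix (Fin N → ι) (Fin N → ι) k) :
    extendLast (∑ x ∈ s, F x) = ∑ x ∈ s, extendLast (F x) := by
  ext f g
  simp [extendLast, Matrix.sum_apply, Finset.sum_mul]

lemma extendFirst_Bop (B : Matrix (ι × ι) (ι × ι) k) (i : ℕ) :
    extendFirst (Bop B N i) = Bop B (N+1) (i+1) := by
  by_cases h : i + 1 < N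
  · have h' : i + 1 + 1 < N + 1 := Nat.succ_lt_succ h
    ext f g
    simp only [Bop, h, h', ↓reduceDIte, extendFirst, Fin.prod_univ_succ, Fin.tail]
    have e0 : ((0 : Fin (N+1)) : ℕ) = 0 := rfl
    simp only [e0]
    norm_num
    rfl
  · by_cases h2 : i + 1 + 1 < N + 1
    · exact absurd (Nat.lt_of_succ_lt_succ h2) h
    · simp only [Bop, h, h2, ↓reduceDIte, extendFirst_one]

lemma extendLast_Bop (B : Matrix (ι × ι) (ι × ι) k) (i : ℕ) (hne : i + 1 ≠ N) :
    extendLast (Bop B N i) = Bop B (N+1) i := by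
  by_cases h : i + 1 < N
  · have h' : i + 1 < N + 1 := Nat.lt_succ_of_lt h
    ext f g
    simp only [Bop, h, h', ↓reduceDIte, extendLast, Fin.prod_univ_castSucc, Fin.init]
    have hl : ((Fin.last N : Fin (N+1)) : ℕ) = N := rfl
    have hcond : ¬((N = i) ∨ (N = i + 1)) := by omega
    simp only [hl, hcond, if_false, if_neg hcond]
    have h1 : ∀ (u : Fin (N+1) → ι),
        u (Fin.castSucc ⟨i, Nat.lt_of_succ_lt h⟩) = u ⟨i, Nat.lt_of_succ_lt h'⟩ := by
      intro u; congr 1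
    have h2 : ∀ (u : Fin (N+1) → ι), u (Fin.castSucc ⟨i+1, h⟩) = u ⟨i+1, h'⟩ := by
      intro u; congr 1
    rw [h1 f, h2 f, h1 g, h2 g]
    have h3 : ∀ j : Fin N, ((Fin.castSucc j : Fin (N+1)) : ℕ) = (j : ℕ) := fun j => rfl
    simp only [h3]
    rw [mul_right_comm, mul_assoc, mul_comm (if f (Fin.last N) = g (Fin.last N) then (1:k) else 0)]
    rfl
  · have h2 : ¬(i + 1 < N + 1) := by omega
    simp only [Bop, h, h2, ↓reduceDIte, extendLast_one]

lemma prod_delta (t u : Fin N → ι) :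
    (∏ j : Fin N, if t j = u j then (1:k) else 0) = if t = u then 1 else 0 := by
  by_cases h : t = u
  · simp [h]
  · rw [if_neg h]
    obtain ⟨j, hj⟩ := Function.ne_iff.mp h
    exact Finset.prod_eq_zero (Finset.mem_univ j) (by simp [hj])

lemma prodA (F G : Fin (N+2) → ι) :
    (∏ j : Fin (N+2), if (j:ℕ) = 0 ∨ (j:ℕ) = 0+1 then (1:k) else if F j = G j then 1 else 0)
    = if Fin.tail (Fin.tail F) = Fin.tail (Fin.tail G) then 1 else 0 := by
  rw [Fin.prod_univ_succ, Fin.prod_univ_succ]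
  have c0 : (((0 : Fin (N+2)) : ℕ) = 0 ∨ ((0 : Fin (N+2)) : ℕ) = 0+1) := Or.inl rfl
  have c1 : ((((0:Fin (N+1)).succ : Fin (N+2)) : ℕ) = 0 ∨
      (((0:Fin (N+1)).succ : Fin (N+2)) : ℕ) = 0+1) := Or.inr rfl
  rw [if_pos c0, if_pos c1, one_mul, one_mul]
  have hcond : ∀ j : Fin N, ¬(((j.succ.succ : Fin (N+2)) : ℕ) = 0 ∨
      ((j.succ.succ : Fin (N+2)) : ℕ) = 0+1) := by
    intro j; simp only [Fin.val_succ]; omega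
  rw [Finset.prod_congr rfl (fun j _ => if_neg (hcond j))]
  exact prod_delta _ _

lemma prodB (F G : Fin (N+2) → ι) :
    (∏ j : Fin (N+2), if (j:ℕ) = N ∨ (j:ℕ) = N+1 then (1:k) else if F j = G j then 1 else 0)
    = if Fin.init (Fin.init F) = Fin.init (Fin.init G) then 1 else 0 := by
  rw [Fin.prod_univ_castSucc, Fin.prod_univ_castSucc]
  have c0 : (((Fin.last (N+1) : Fin (N+2)) : ℕ) = N ∨
      ((Fin.last (N+1) : Fin (N+2)) : ℕ) = N+1) := Or.inr rfl
  have c1 : ((((Fin.last N).castSucc : Fin (N+2)) : ℕ) = N ∨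
      (((Fin.last N).castSucc : Fin (N+2)) : ℕ) = N+1) := Or.inl rfl
  rw [if_pos c0, if_pos c1, mul_one, mul_one]
  have hcond : ∀ j : Fin N, ¬(((j.castSucc.castSucc : Fin (N+2)) : ℕ) = N ∨
      ((j.castSucc.castSucc : Fin (N+2)) : ℕ) = N+1) := by
    intro j; simp only [Fin.coe_castSucc]; omega
  rw [Finset.prod_congr rfl (fun j _ => if_neg (hcond j))]
  exact prod_delta _ _

def cons2Equiv (ι : Type*) (N : ℕ) : (ι × ι × (Fin N → ι)) ≃ (Fin (N+2) → ι) :=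
  ((Equiv.refl ι).prodCongr (Fin.consEquiv fun _ => ι)).trans (Fin.consEquiv fun _ => ι)

lemma cons2Equiv_eq (a b : ι) (t : Fin N → ι) :
    cons2Equiv ι N (a, b, t) = Fin.cons a (Fin.cons b t) := rfl

def snoc2Equiv (ι : Type*) (N : ℕ) : (ι × ι × (Fin N → ι)) ≃ (Fin (N+2) → ι) :=
  ((Equiv.refl ι).prodCongr (Fin.snocEquiv fun _ => ι)).trans (Fin.snocEquiv fun _ => ι)

lemma snoc2Equiv_eq (a b : ι) (t : Fin N → ι) :
    snoc2Equiv ι N (a, b, t) = Fin.snoc (Fin.snoc t b) a := rfl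

lemma sum_if_const {α : Type*} [Fintype α] (P : Prop) [Decidable P] (f : α → k) :
    (∑ x : α, if P then f x else 0) = if P then ∑ x : α, f x else 0 := by
  split <;> simp

lemma comm_first (B : Matrix (ι × ι) (ι × ι) k) (M : Matrix (Fin N → ι) (Fin N → ι) k) :
    extendFirst (extendFirst M) * Bop B (N+2) 0 = Bop B (N+2) 0 * extendFirst (extendFirst M) := by
  have h02 : (0:ℕ) + 1 < N + 2 := by omega
  ext f g
  simp only [Matrix.mul_apply]
  simp only [Bop, h02, ↓reduceDIte, extendFirst]
  rw [← Equiv.sum_comp (cons2Equiv ι N), ← Equiv.sum_comp (cons2Equiv ι N)]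
  simp only [cons2Equiv_eq, Fintype.sum_prod_type, prodA, Fin.cons_zero, Fin.tail_cons,
    Fin.mk_zero, Fin.mk_one, Fin.cons_one, show (⟨0+1, h02⟩ : Fin (N+2)) = 1 from rfl]
  simp only [ite_mul, mul_ite, zero_mul, mul_zero, sum_if_const, Finset.sum_ite_eq,
    Finset.sum_ite_eq', Finset.mem_univ, if_true]
  rw [show Fin.tail f 0 = f 1 from congrArg f (Fin.succ_zero_eq_one),
    show Fin.tail g 0 = g 1 from congrArg g (Fin.succ_zero_eq_one)]
  ring

lemma comm_last (B : Matrix (ι × ι) (ι × ι) k) (M : Matrix (Fin N → ι) (Fin N → ι) k) :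
    extendLast (extendLast M) * Bop B (N+2) N = Bop B (N+2) N * extendLast (extendLast M) := by
  have h02 : N + 1 < N + 2 := by omega
  have e1 : (⟨N, Nat.lt_of_succ_lt h02⟩ : Fin (N+2)) = (Fin.last N).castSucc := rfl
  have e2 : (⟨N+1, h02⟩ : Fin (N+2)) = Fin.last (N+1) := rfl
  ext f g
  simp only [Matrix.mul_apply]
  simp only [Bop, h02, ↓reduceDIte, extendLast, e1, e2]
  rw [← Equiv.sum_comp (snoc2Equiv ι N), ← Equiv.sum_comp (snoc2Equiv ι N)]
  simp only [snoc2Equiv_eq, Fintype.sum_prod_type, prodB, Fin.snoc_last, Fin.snoc_castSucc,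
    Fin.init_snoc]
  simp only [ite_mul, mul_ite, zero_mul, mul_zero, sum_if_const, Finset.sum_ite_eq,
    Finset.sum_ite_eq', Finset.mem_univ, if_true]
  rw [show Fin.init f (Fin.last N) = f ((Fin.last N).castSucc) from rfl,
    show Fin.init g (Fin.last N) = g ((Fin.last N).castSucc) from rfl]
  ring

/-- Reversed ascending chains `1, B_1, B_2 B_1, …`. -/
def revAsc (B : Matrix (ι × ι) (ι × ι) k) (N : ℕ) :
    ℕ → Matrix (Fin N → ι) (Fin N → ι) k
  | 0 => 1
  | m + 1 => Bop B N m * revAsc B N m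

def TA (B : Matrix (ι × ι) (ι × ι) k) (N : ℕ) : Matrix (Fin N → ι) (Fin N → ι) k :=
  ∑ m ∈ Finset.range N, revAsc B N m

/-- Reversed descending chains `1, B_{N-1}, B_{N-2} B_{N-1}, …`. -/
def revDesc (B : Matrix (ι × ι) (ι × ι) k) (N : ℕ) :
    ℕ → Matrix (Fin N → ι) (Fin N → ι) k
  | 0 => 1
  | m + 1 => Bop B N (N - 2 - m) * revDesc B N m

def TD (B : Matrix (ι × ι) (ι × ι) k) (N : ℕ) : Matrix (Fin N → ι) (Fin N → ι) k :=
  ∑ m ∈ Finset.range N, revDesc B N m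

variable (B : Matrix (ι × ι) (ι × ι) k)

lemma chainAsc_w (W m : ℕ) :
    chainAsc B (W+1) (m+1) = Bop B (W+1) 0 * extendFirst (chainAsc B W m) := by
  induction m with
  | zero =>
      show chainAsc B (W+1) 0 * Bop B (W+1) 0 = _
      rw [show chainAsc B (W+1) 0 = 1 from rfl, show chainAsc B W 0 = 1 from rfl,
        extendFirst_one, one_mul, mul_one]
  | succ m ih =>
      show chainAsc B (W+1) (m+1) * Bop B (W+1) (m+1) = _
      rw [ih, ← extendFirst_Bop, mul_assoc, ← extendFirst_mul]
      rfl

lemma braidedInt'_w (W : ℕ) :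
    braidedInt' B (W+1) = 1 + Bop B (W+1) 0 * extendFirst (braidedInt' B W) := by
  rw [braidedInt', Finset.sum_range_succ', show chainAsc B (W+1) 0 = 1 from rfl,
    Finset.sum_congr rfl (fun m _ => chainAsc_w B W m)]
  conv_rhs => rw [braidedInt']
  rw [extendFirst_sum, Finset.mul_sum]
  exact add_comm _ _

lemma revAsc_w (W m : ℕ) :
    revAsc B (W+1) (m+1) = extendFirst (revAsc B W m) * Bop B (W+1) 0 := by
  induction m with
  | zero =>
      show Bop B (W+1) 0 * revAsc B (W+1) 0 = _
      rw [show revAsc B (W+1) 0 = 1 from rfl, show revAsc B W 0 = 1 from rfl,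
        extendFirst_one, one_mul, mul_one]
  | succ m ih =>
      show Bop B (W+1) (m+1) * revAsc B (W+1) (m+1) = _
      rw [ih, ← extendFirst_Bop, ← mul_assoc, ← extendFirst_mul]
      rfl

lemma TA_w (W : ℕ) : TA B (W+1) = 1 + extendFirst (TA B W) * Bop B (W+1) 0 := by
  rw [TA, Finset.sum_range_succ', show revAsc B (W+1) 0 = 1 from rfl,
    Finset.sum_congr rfl (fun m _ => revAsc_w B W m)]
  conv_rhs => rw [TA]
  rw [extendFirst_sum, Finset.sum_mul]
  exact add_comm _ _

lemma chainDesc_w (W : ℕ) : ∀ m, m < W →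
    chainDesc B (W+1) (m+1) = Bop B (W+1) (W-1) * extendLast (chainDesc B W m) := by
  intro m
  induction m with
  | zero =>
      intro _
      show chainDesc B (W+1) 0 * Bop B (W+1) (W+1-2-0) = _
      rw [show chainDesc B (W+1) 0 = 1 from rfl, show chainDesc B W 0 = 1 from rfl,
        extendLast_one, one_mul, mul_one, show W+1-2-0 = W-1 by omega]
  | succ m ih =>
      intro hm
      show chainDesc B (W+1) (m+1) * Bop B (W+1) (W+1-2-(m+1)) = _
      rw [ih (by omega), show W+1-2-(m+1) = W-2-m by omega,
        ← extendLast_Bop B (W-2-m) (by omega), mul_assoc, ← extendLast_mul]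
      rfl

lemma braidedInt_w (W : ℕ) :
    braidedInt B (W+1) = 1 + Bop B (W+1) (W-1) * extendLast (braidedInt B W) := by
  rw [braidedInt, Finset.sum_range_succ', show chainDesc B (W+1) 0 = 1 from rfl,
    Finset.sum_congr rfl (fun m hm => chainDesc_w B W m (Finset.mem_range.mp hm))]
  conv_rhs => rw [braidedInt]
  rw [extendLast_sum, Finset.mul_sum]
  exact add_comm _ _

lemma revDesc_w (W : ℕ) : ∀ m, m < W →
    revDesc B (W+1) (m+1) = extendLast (revDesc B W m) * Bop B (W+1) (W-1) := by
  intro m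
  induction m with
  | zero =>
      intro _
      show Bop B (W+1) (W+1-2-0) * revDesc B (W+1) 0 = _
      rw [show revDesc B (W+1) 0 = 1 from rfl, show revDesc B W 0 = 1 from rfl,
        extendLast_one, one_mul, mul_one, show W+1-2-0 = W-1 by omega]
  | succ m ih =>
      intro hm
      show Bop B (W+1) (W+1-2-(m+1)) * revDesc B (W+1) (m+1) = _
      rw [ih (by omega), show W+1-2-(m+1) = W-2-m by omega,
        ← extendLast_Bop B (W-2-m) (by omega), ← mul_assoc, ← extendLast_mul]
      rfl

lemma TD_w (W : ℕ) : TD B (W+1) = 1 + extendLast (TD B W) * Bop B (W+1) (W-1) := by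
  rw [TD, Finset.sum_range_succ', show revDesc B (W+1) 0 = 1 from rfl,
    Finset.sum_congr rfl (fun m hm => revDesc_w B W m (Finset.mem_range.mp hm))]
  conv_rhs => rw [TD]
  rw [extendLast_sum, Finset.sum_mul]
  exact add_comm _ _

lemma factTD : ∀ N : ℕ,
    braidedFactorial B (N+1) = TD B (N+1) * extendLast (braidedFactorial B N) := by
  intro N
  induction N with
  | zero =>
      show extendLast (braidedFactorial B 0) * braidedInt B 1 = _
      rw [show braidedFactorial B 0 = 1 from rfl, extendLast_one,
        show braidedInt B 1 = 1 by rw [braidedInt, Finset.sum_range_one, chainDesc],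
        show TD B 1 = 1 by rw [TD, Finset.sum_range_one, revDesc]]
  | succ N ih =>
      have step : braidedFactorial B (N+2)
          = extendLast (braidedFactorial B (N+1)) * braidedInt B (N+2) := rfl
      rw [step, braidedInt_w B (N+1), show N+1-1 = N from rfl, mul_add, mul_one]
      nth_rewrite 2 [ih]
      rw [extendLast_mul, TD_w B (N+1), show N+1-1 = N from rfl, add_mul, one_mul,
        mul_assoc (extendLast (TD B (N+1))), mul_assoc (extendLast (TD B (N+1))),
        ← mul_assoc (extendLast (extendLast (braidedFactorial B N))), comm_last,
        mul_assoc (Bop B (N+2) N), ← extendLast_mul,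
        show extendLast (braidedFactorial B N) * braidedInt B (N+1)
          = braidedFactorial B (N+1) from rfl, ← mul_assoc]

lemma factTA
    (hrec : ∀ N : ℕ,
      braidedFactorial B (N + 1) = extendFirst (braidedFactorial B N) * braidedInt' B (N + 1)) :
    ∀ N : ℕ, braidedFactorial B (N+1) = TA B (N+1) * extendFirst (braidedFactorial B N) := by
  intro N
  induction N with
  | zero =>
      show extendLast (braidedFactorial B 0) * braidedInt B 1 = _
      rw [show braidedFactorial B 0 = 1 from rfl, extendLast_one, extendFirst_one,
        show braidedInt B 1 = 1 by rw [braidedInt, Finset.sum_range_one, chainDesc],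
        show TA B 1 = 1 by rw [TA, Finset.sum_range_one, revAsc]]
  | succ N ih =>
      rw [hrec (N+1), braidedInt'_w B (N+1), mul_add, mul_one]
      nth_rewrite 2 [ih]
      rw [extendFirst_mul, TA_w B (N+1), add_mul, one_mul,
        mul_assoc (extendFirst (TA B (N+1))), mul_assoc (extendFirst (TA B (N+1))),
        ← mul_assoc (extendFirst (extendFirst (braidedFactorial B N))), comm_first,
        mul_assoc (Bop B (N+2) 0), ← extendFirst_mul, ← hrec N, ← mul_assoc]

lemma mulVec_extendFirst (M : Matrix (Fin N → ι) (Fin N → ι) k) (v : ι → k)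
    (ω : (Fin N → ι) → k) :
    extendFirst M *ᵥ (fun f => v (f 0) * ω (Fin.tail f))
      = fun f => v (f 0) * (M *ᵥ ω) (Fin.tail f) := by
  funext f
  simp only [Matrix.mulVec, dotProduct, extendFirst]
  rw [← Equiv.sum_comp (Fin.consEquiv fun _ => ι)]
  simp only [consEquiv_eq, Fintype.sum_prod_type, Fin.tail_cons, Fin.cons_zero]
  simp only [ite_mul, mul_ite, zero_mul, mul_zero, one_mul, sum_if_const, Finset.sum_ite_eq,
    Finset.sum_ite_eq', Finset.mem_univ, if_true]
  rw [Finset.mul_sum]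
  exact Finset.sum_congr rfl fun t _ => by ring

lemma mulVec_extendLast (M : Matrix (Fin N → ι) (Fin N → ι) k) (v : ι → k)
    (ω : (Fin N → ι) → k) :
    extendLast M *ᵥ (fun f => ω (Fin.init f) * v (f (Fin.last N)))
      = fun f => (M *ᵥ ω) (Fin.init f) * v (f (Fin.last N)) := by
  funext f
  simp only [Matrix.mulVec, dotProduct, extendLast]
  rw [← Equiv.sum_comp (Fin.snocEquiv fun _ => ι)]
  simp only [snocEquiv_eq, Fintype.sum_prod_type, Fin.init_snoc, Fin.snoc_last]
  simp only [ite_mul, mul_ite, zero_mul, mul_zero, mul_one, sum_if_const, Finset.sum_ite_eq,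
    Finset.sum_ite_eq', Finset.mem_univ, if_true]
  rw [Finset.sum_mul]
  exact Finset.sum_congr rfl fun t _ => by ring

end Aux

/-- let `K_N = ker [N!]_B`. The two-sided ideal of the tensor
algebra generated by all the `K_N` contains each `K_N` in its degree-`N`
component; moreover, if the braided factorial also satisfies the opposite
recursion `[N!]_B = (1 ⊗ [(N-1)!]_B)[N]'_B`, then
`V ⊗ K_{N-1} + K_{N-1} ⊗ V ⊆ K_N`. -/
theorem stmt17 {k : Type*} [Field k] {ι : Type*} [Fintype ι] [DecidableEq ι]
    [FiniteDimensional k (ι → k)]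
    (B : Matrix (ι × ι) (ι × ι) k)
    (hBraid : Bop B 3 0 * Bop B 3 1 * Bop B 3 0 = Bop B 3 1 * Bop B 3 0 * Bop B 3 1)
    (hrec : ∀ N : ℕ,
      braidedFactorial B (N + 1) = extendFirst (braidedFactorial B N) * braidedInt' B (N + 1))
    (J : Submodule k (FreeAlgebra k ι))
    (hJ : J = Submodule.span k {z : FreeAlgebra k ι |
      ∃ (x y : FreeAlgebra k ι) (N : ℕ) (ω : (Fin N → ι) → k),
        braidedFactorial B N *ᵥ ω = 0 ∧ z = x * embedVec k N ω * y}) :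
    (∀ (N : ℕ) (ω : (Fin N → ι) → k),
      braidedFactorial B N *ᵥ ω = 0 → embedVec k N ω ∈ J) ∧
    (∀ (N : ℕ) (ω : (Fin N → ι) → k), braidedFactorial B N *ᵥ ω = 0 →
      ∀ v : ι → k,
        braidedFactorial B (N + 1) *ᵥ (fun f => v (f 0) * ω (Fin.tail f)) = 0 ∧
        braidedFactorial B (N + 1) *ᵥ (fun f => ω (Fin.init f) * v (f (Fin.last N))) = 0) := by
  subst hJ
  constructor
  · intro N ω h
    exact Submodule.subset_span ⟨1, 1, N, ω, h, by rw [one_mul, mul_one]⟩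
  · intro N ω h v
    constructor
    · rw [factTA B hrec N, ← Matrix.mulVec_mulVec, mulVec_extendFirst, h]
      have hz : (fun f : Fin (N+1) → ι => v (f 0) * (0 : (Fin N → ι) → k) (Fin.tail f))
          = 0 := by funext f; simp
      rw [hz, Matrix.mulVec_zero]
    · rw [factTD B N, ← Matrix.mulVec_mulVec, mulVec_extendLast, h]
      have hz : (fun f : Fin (N+1) → ι => (0 : (Fin N → ι) → k) (Fin.init f)
          * v (f (Fin.last N))) = 0 := by funext f; simp
      rw [hz, Matrix.mulVec_zero]
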